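/- For all real x, x * tanh(x) ≤ x^2 - x^4/3 + 2*x^6/15. -/

import Mathlib

open Real Set

private lemma aux_sinh_le_mul_cosh {x : ℝ} (hx : 0 ≤ x) :
    Real.sinh x ≤ x * Real.cosh x := by
  have hd : ∀ t : ℝ, HasDerivAt (fun t => t * Real.cosh t - Real.sinh t)
      (t * Real.sinh t) t := by
    intro t
    have h := ((hasDerivAt_id' t).mul (Real.hasDerivAt_cosh t)).sub (Real.hasDerivAt_sinh t)
    exact h.congr_deriv (by ring)
  have hmono : MonotoneOn (fun t => t * Real.cosh t - Real.sinh t) (Ici 0) := by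
    apply monotoneOn_of_deriv_nonneg (convex_Ici 0)
    · exact Continuous.continuousOn (by continuity)
    · intro t _; exact (hd t).differentiableAt.differentiableWithinAt
    · intro t ht
      rw [interior_Ici] at ht
      rw [(hd t).deriv]
      exact mul_nonneg (le_of_lt ht) (Real.sinh_nonneg_iff.mpr (le_of_lt ht))
  have h0 : (fun t => t * Real.cosh t - Real.sinh t) 0 ≤
      (fun t => t * Real.cosh t - Real.sinh t) x :=
    hmono (self_mem_Ici) hx hx
  simp at h0
  linarith

private lemma aux_cubic_le_sinh {x : ℝ} (hx : 0 ≤ x) :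
    (x - x ^ 3 / 3) * Real.cosh x ≤ Real.sinh x := by
  have hd : ∀ t : ℝ, HasDerivAt (fun t => Real.sinh t - (t - t ^ 3 / 3) * Real.cosh t)
      (t ^ 2 * Real.cosh t - (t - t ^ 3 / 3) * Real.sinh t) t := by
    intro t
    have hp : HasDerivAt (fun t : ℝ => t - t ^ 3 / 3) (1 - t ^ 2) t := by
      have := ((hasDerivAt_id' t).sub ((hasDerivAt_pow 3 t).div_const 3))
      exact this.congr_deriv (by ring)
    have h := (Real.hasDerivAt_sinh t).sub (hp.mul (Real.hasDerivAt_cosh t))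
    exact h.congr_deriv (by ring)
  have hmono : MonotoneOn (fun t => Real.sinh t - (t - t ^ 3 / 3) * Real.cosh t) (Ici 0) := by
    apply monotoneOn_of_deriv_nonneg (convex_Ici 0)
    · exact Continuous.continuousOn (by continuity)
    · intro t _; exact (hd t).differentiableAt.differentiableWithinAt
    · intro t ht
      rw [interior_Ici] at ht
      rw [(hd t).deriv]
      have ht' : (0:ℝ) ≤ t := le_of_lt ht
      have h1 : Real.sinh t ≤ t * Real.cosh t := aux_sinh_le_mul_cosh ht'
      have h2 : 0 ≤ Real.sinh t := Real.sinh_nonneg_iff.mpr ht'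
      nlinarith [mul_le_mul_of_nonneg_left h1 ht', mul_nonneg (mul_nonneg (mul_nonneg ht' ht') ht') h2]
  have h0 : (fun t => Real.sinh t - (t - t ^ 3 / 3) * Real.cosh t) 0 ≤
      (fun t => Real.sinh t - (t - t ^ 3 / 3) * Real.cosh t) x :=
    hmono (self_mem_Ici) hx hx
  simp at h0
  linarith

private lemma aux_sinh_le_quintic {x : ℝ} (hx : 0 ≤ x) (hx2 : x ≤ 2) :
    Real.sinh x ≤ (x - x ^ 3 / 3 + 2 * x ^ 5 / 15) * Real.cosh x := by
  have hd : ∀ t : ℝ, HasDerivAt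
      (fun t => (t - t ^ 3 / 3 + 2 * t ^ 5 / 15) * Real.cosh t - Real.sinh t)
      ((-t ^ 2 + 2 * t ^ 4 / 3) * Real.cosh t
        + (t - t ^ 3 / 3 + 2 * t ^ 5 / 15) * Real.sinh t) t := by
    intro t
    have hp : HasDerivAt (fun t : ℝ => t - t ^ 3 / 3 + 2 * t ^ 5 / 15)
        (1 - t ^ 2 + 2 * t ^ 4 / 3) t := by
      have := (((hasDerivAt_id' t).sub ((hasDerivAt_pow 3 t).div_const 3)).add
        (((hasDerivAt_pow 5 t).const_mul 2).div_const 15))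
      exact this.congr_deriv (by ring)
    have h := (hp.mul (Real.hasDerivAt_cosh t)).sub (Real.hasDerivAt_sinh t)
    exact h.congr_deriv (by ring)
  have hmono : MonotoneOn
      (fun t => (t - t ^ 3 / 3 + 2 * t ^ 5 / 15) * Real.cosh t - Real.sinh t) (Icc 0 2) := by
    apply monotoneOn_of_deriv_nonneg (convex_Icc 0 2)
    · exact Continuous.continuousOn (by continuity)
    · intro t _; exact (hd t).differentiableAt.differentiableWithinAt
    · intro t ht
      rw [interior_Icc] at ht
      rw [(hd t).deriv]
      obtain ⟨ht0, ht2⟩ := ht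
      have ht0' : (0:ℝ) ≤ t := le_of_lt ht0
      have ht2' : t ≤ 2 := le_of_lt ht2
      have hcosh : (0:ℝ) < Real.cosh t := Real.cosh_pos t
      have hsinh : (0:ℝ) ≤ Real.sinh t := Real.sinh_nonneg_iff.mpr ht0'
      have hlow : (t - t ^ 3 / 3) * Real.cosh t ≤ Real.sinh t := aux_cubic_le_sinh ht0'
      have hp : (0:ℝ) ≤ t - t ^ 3 / 3 + 2 * t ^ 5 / 15 := by
        nlinarith [sq_nonneg (t ^ 2 - 5 / 4), pow_nonneg ht0' 5]
      have ht22 : t ^ 2 ≤ 4 := by nlinarith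
      have h8 : t ^ 8 ≤ 4 * t ^ 6 := by
        nlinarith [mul_le_mul_of_nonneg_left ht22 (pow_nonneg ht0' 6)]
      have hq : 0 ≤ -t ^ 2 + 2 * t ^ 4 / 3
          + (t - t ^ 3 / 3 + 2 * t ^ 5 / 15) * (t - t ^ 3 / 3) := by nlinarith [h8, pow_nonneg ht0' 6]
      nlinarith [mul_le_mul_of_nonneg_left hlow hp, mul_nonneg hcosh.le hq]
  have h0 : (fun t => (t - t ^ 3 / 3 + 2 * t ^ 5 / 15) * Real.cosh t - Real.sinh t) 0 ≤
      (fun t => (t - t ^ 3 / 3 + 2 * t ^ 5 / 15) * Real.cosh t - Real.sinh t) x :=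
    hmono (left_mem_Icc.mpr (by norm_num)) ⟨hx, hx2⟩ hx
  simp at h0
  linarith

private lemma aux_main {x : ℝ} (hx : 0 ≤ x) :
    x * Real.tanh x ≤ x ^ 2 - x ^ 4 / 3 + 2 * x ^ 6 / 15 := by
  rcases le_total x 2 with h2 | h2
  · have h := aux_sinh_le_quintic hx h2
    have htanh : Real.tanh x ≤ x - x ^ 3 / 3 + 2 * x ^ 5 / 15 := by
      rw [Real.tanh_eq_sinh_div_cosh, div_le_iff₀ (Real.cosh_pos x)]
      exact h
    have hmul := mul_le_mul_of_nonneg_left htanh hx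
    nlinarith
  · have htanh : Real.tanh x ≤ 1 := by
      rw [Real.tanh_eq_sinh_div_cosh, div_le_one (Real.cosh_pos x)]
      have := Real.cosh_sub_sinh x
      linarith [Real.exp_pos (-x)]
    have hmul := mul_le_mul_of_nonneg_left htanh hx
    have hx2 : (4:ℝ) ≤ x ^ 2 := by nlinarith
    have h4 : (0:ℝ) ≤ x ^ 4 := by positivity
    nlinarith

theorem mul_tanh_taylor_upper (x : ℝ) :
    x * Real.tanh x ≤ x ^ 2 - x ^ 4 / 3 + 2 * x ^ 6 / 15 := by
  rcases le_total 0 x with hx | hx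
  · exact aux_main hx
  · have h := aux_main (neg_nonneg.mpr hx)
    rw [Real.tanh_neg] at h
    nlinarith [h]
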